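/- For a positive definite p×p matrix Σ and any sequence of symmetric matrices Σ̂_n → Σ, the eigenvalue-adjusted estimator Σ̂_n⁺ obtained by replacing each eigenvalue d̂_i of the correlation matrix Ĉ_n = V̂^{-1/2}Σ̂_n V̂^{-1/2} with max{d̂_i, ε n^{-u}} (ε, u > 0) and reassembling satisfies: Σ̂_n⁺ is positive definite for every n, and Σ̂_n⁺ → Σ as n → ∞. -/

import Mathlib

open Matrix Filter

private lemma posDef_conj' {p : ℕ} {M B : Matrix (Fin p) (Fin p) ℝ}
    (hM : M.PosDef) (hB : Function.Injective B.mulVec) : (Bᵀ * M * B).PosDef := by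
  have h1 : (Bᵀ * M * B).IsHermitian := by
    simpa using Matrix.isHermitian_conjTranspose_mul_mul B hM.1
  refine Matrix.PosDef.of_dotProduct_mulVec_pos h1 fun x hx => ?_
  have hBx : B *ᵥ x ≠ 0 := fun h => hx (hB (by simpa using h))
  have h2 := hM.dotProduct_mulVec_pos hBx
  simpa only [star_trivial, ← Matrix.mulVec_mulVec, Matrix.dotProduct_mulVec,
    Matrix.vecMul_transpose] using h2

theorem adjusted_estimator_posdef_consistent (p : ℕ)
    (Sig : Matrix (Fin p) (Fin p) ℝ) (hSig : Sig.PosDef)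
    (Shat : ℕ → Matrix (Fin p) (Fin p) ℝ)
    (hsymm : ∀ n, (Shat n).IsSymm)
    (hdiag : ∀ n i, 0 < Shat n i i)
    (hconv : Tendsto Shat atTop (nhds Sig))
    (P : ℕ → Matrix (Fin p) (Fin p) ℝ) (hP : ∀ n, (P n)ᵀ * P n = 1)
    (d : ℕ → Fin p → ℝ)
    (hC : ∀ n,
      (Matrix.diagonal fun i => (Real.sqrt (Shat n i i))⁻¹) * Shat n *
        (Matrix.diagonal fun i => (Real.sqrt (Shat n i i))⁻¹)
      = (P n)ᵀ * Matrix.diagonal (d n) * P n)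
    (ε u : ℝ) (hε : 0 < ε) (hu : 0 < u)
    (Splus : ℕ → Matrix (Fin p) (Fin p) ℝ)
    (hSplus : ∀ n, Splus n =
      (Matrix.diagonal fun i => Real.sqrt (Shat n i i)) * (P n)ᵀ *
        Matrix.diagonal (fun i => max (d n i) (ε * (n : ℝ) ^ (-u))) * P n *
        (Matrix.diagonal fun i => Real.sqrt (Shat n i i))) :
    (∀ n, 1 ≤ n → (Splus n).PosDef) ∧ Tendsto Splus atTop (nhds Sig) := by
  classical
  have hsq : ∀ n i, 0 < Real.sqrt (Shat n i i) := fun n i => Real.sqrt_pos.2 (hdiag n i)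
  have hAV : ∀ n, (Matrix.diagonal fun i => Real.sqrt (Shat n i i)) *
      (Matrix.diagonal fun i => (Real.sqrt (Shat n i i))⁻¹) = 1 := by
    intro n
    rw [Matrix.diagonal_mul_diagonal]
    rw [show (fun i => Real.sqrt (Shat n i i) * (Real.sqrt (Shat n i i))⁻¹) = fun _ : Fin p => (1:ℝ)
      from funext fun i => mul_inv_cancel₀ (hsq n i).ne']
    exact Matrix.diagonal_one
  have hVA : ∀ n, (Matrix.diagonal fun i => (Real.sqrt (Shat n i i))⁻¹) *
      (Matrix.diagonal fun i => Real.sqrt (Shat n i i)) = 1 := by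
    intro n
    rw [Matrix.diagonal_mul_diagonal]
    rw [show (fun i => (Real.sqrt (Shat n i i))⁻¹ * Real.sqrt (Shat n i i)) = fun _ : Fin p => (1:ℝ)
      from funext fun i => inv_mul_cancel₀ (hsq n i).ne']
    exact Matrix.diagonal_one
  have hPPt : ∀ n, P n * (P n)ᵀ = 1 := fun n => mul_eq_one_comm.mp (hP n)
  have hShat_eq : ∀ n, (Matrix.diagonal fun i => Real.sqrt (Shat n i i)) *
      ((P n)ᵀ * Matrix.diagonal (d n) * P n) *
      (Matrix.diagonal fun i => Real.sqrt (Shat n i i)) = Shat n := by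
    intro n
    rw [← hC n]
    rw [show (Matrix.diagonal fun i => Real.sqrt (Shat n i i)) *
        ((Matrix.diagonal fun i => (Real.sqrt (Shat n i i))⁻¹) * Shat n *
          (Matrix.diagonal fun i => (Real.sqrt (Shat n i i))⁻¹)) *
        (Matrix.diagonal fun i => Real.sqrt (Shat n i i)) =
        ((Matrix.diagonal fun i => Real.sqrt (Shat n i i)) *
          (Matrix.diagonal fun i => (Real.sqrt (Shat n i i))⁻¹)) * Shat n *
        ((Matrix.diagonal fun i => (Real.sqrt (Shat n i i))⁻¹) *
          (Matrix.diagonal fun i => Real.sqrt (Shat n i i))) from by noncomm_ring]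
    rw [hAV n, hVA n, one_mul, mul_one]
  -- Part 1: positive definiteness
  have posdef : ∀ n, 1 ≤ n → (Splus n).PosDef := by
    intro n hn
    have hnpos : (0:ℝ) < (n:ℝ) := by exact_mod_cast hn
    have ht : 0 < ε * (n:ℝ) ^ (-u) := mul_pos hε (Real.rpow_pos_of_pos hnpos _)
    have hDp : (Matrix.diagonal fun i => max (d n i) (ε * (n:ℝ) ^ (-u))).PosDef :=
      Matrix.PosDef.diagonal fun i => lt_of_lt_of_le ht (le_max_right _ _)
    have hPunit : IsUnit (P n) :=
      (Matrix.isUnit_iff_isUnit_det _).2 (Matrix.isUnit_det_of_left_inverse (hP n))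
    have hAunit : IsUnit (Matrix.diagonal fun i => Real.sqrt (Shat n i i)) := by
      refine (Matrix.isUnit_iff_isUnit_det _).2 ?_
      rw [Matrix.det_diagonal]
      exact isUnit_iff_ne_zero.2 (Finset.prod_ne_zero_iff.2 fun i _ => (hsq n i).ne')
    have hBinj : Function.Injective
        (P n * Matrix.diagonal fun i => Real.sqrt (Shat n i i)).mulVec :=
      Matrix.mulVec_injective_iff_isUnit.2 (hPunit.mul hAunit)
    have hpd := posDef_conj' hDp hBinj
    rw [hSplus n]
    convert hpd using 1
    rw [Matrix.transpose_mul, Matrix.diagonal_transpose]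
    noncomm_ring
  refine ⟨posdef, ?_⟩
  -- Part 2: convergence
  have key : ∀ᶠ n : ℕ in atTop, ∀ i, ε * (n:ℝ) ^ (-u) ≤ d n i := by
    rcases Nat.eq_zero_or_pos p with hp | hp
    · subst hp
      exact Eventually.of_forall fun n i => i.elim0
    · -- setup: limit correlation matrix and its minimal quadratic form on the sphere
      set Cm : Matrix (Fin p) (Fin p) ℝ :=
        (Matrix.diagonal fun i => (Real.sqrt (Sig i i))⁻¹) * Sig *
          (Matrix.diagonal fun i => (Real.sqrt (Sig i i))⁻¹) with hCmdef
      have hSigd : ∀ i, 0 < Sig i i := by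
        intro i
        have := hSig.dotProduct_mulVec_pos (x := Pi.single i 1) (fun h => by have := congrFun h i; simp at this)
        simpa [dotProduct, Matrix.mulVec, dotProduct, Pi.single_apply,
          Finset.mul_sum] using this
      have hsqS : ∀ i, 0 < Real.sqrt (Sig i i) := fun i => Real.sqrt_pos.2 (hSigd i)
      have hCm : Cm.PosDef := by
        have hinj : Function.Injective
            (Matrix.diagonal fun i => (Real.sqrt (Sig i i))⁻¹).mulVec := by
          refine Matrix.mulVec_injective_iff_isUnit.2 ?_
          refine (Matrix.isUnit_iff_isUnit_det _).2 ?_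
          rw [Matrix.det_diagonal]
          exact isUnit_iff_ne_zero.2
            (Finset.prod_ne_zero_iff.2 fun i _ => inv_ne_zero (hsqS i).ne')
        have := posDef_conj' hSig hinj
        rwa [Matrix.diagonal_transpose] at this
      -- compact sphere argument
      set K : Set (Fin p → ℝ) := {v | ∑ j, (v j)^2 = 1} with hKdef
      have hKc : IsCompact K := by
        have hclosed : IsClosed K :=
          isClosed_eq (by continuity) continuous_const
        have hsub : K ⊆ Metric.closedBall 0 1 := by
          intro v hv
          rw [Metric.mem_closedBall, dist_zero_right, pi_norm_le_iff_of_nonneg zero_le_one]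
          intro j
          rw [Real.norm_eq_abs, ← Real.sqrt_one, ← Real.sqrt_sq_eq_abs]
          refine Real.sqrt_le_sqrt ?_
          rw [← hv]
          exact Finset.single_le_sum (fun k _ => sq_nonneg (v k)) (Finset.mem_univ j)
        exact (isCompact_closedBall 0 1).of_isClosed_subset hclosed hsub
      have hKne : K.Nonempty := by
        refine ⟨Pi.single ⟨0, hp⟩ 1, ?_⟩
        simp [hKdef, Pi.single_apply, sq]
      set f : (Fin p → ℝ) → ℝ := fun v => v ⬝ᵥ Cm *ᵥ v with hfdef
      have hfc : Continuous f := by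
        have : f = fun v => ∑ j, v j * ∑ k, Cm j k * v k := by
          funext v
          simp [hfdef, dotProduct, Matrix.mulVec]
        rw [this]
        exact continuous_finset_sum _ fun j _ => (continuous_apply j).mul
          (continuous_finset_sum _ fun k _ => continuous_const.mul (continuous_apply k))
      obtain ⟨v0, hv0K, hmin0⟩ := hKc.exists_isMinOn hKne hfc.continuousOn
      have hmin : ∀ v ∈ K, f v0 ≤ f v := fun v hv => hmin0 hv
      have hv0ne : v0 ≠ 0 := by
        intro h
        rw [hKdef] at hv0K
        simp [h] at hv0K
      have hlam : 0 < f v0 := by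
        have := hCm.dotProduct_mulVec_pos hv0ne
        simpa [hfdef] using this
      set lam : ℝ := f v0 with hlamdef
      -- entrywise convergence of correlation matrices
      set Cn : ℕ → Matrix (Fin p) (Fin p) ℝ := fun n =>
        (Matrix.diagonal fun i => (Real.sqrt (Shat n i i))⁻¹) * Shat n *
          (Matrix.diagonal fun i => (Real.sqrt (Shat n i i))⁻¹) with hCndef
      have hE : ∀ j k, Tendsto (fun n => Shat n j k) atTop (nhds (Sig j k)) := by
        intro j k
        have hcont : Continuous fun M : Matrix (Fin p) (Fin p) ℝ => M j k := by
          exact (continuous_apply k).comp (continuous_apply j)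
        exact (hcont.tendsto Sig).comp hconv
      have hCE : ∀ j k, Tendsto (fun n => Cn n j k) atTop (nhds (Cm j k)) := by
        intro j k
        have h1 : ∀ n, Cn n j k =
            (Real.sqrt (Shat n j j))⁻¹ * Shat n j k * (Real.sqrt (Shat n k k))⁻¹ := by
          intro n
          simp [hCndef, Matrix.mul_diagonal, Matrix.diagonal_mul]
        have h2 : Cm j k =
            (Real.sqrt (Sig j j))⁻¹ * Sig j k * (Real.sqrt (Sig k k))⁻¹ := by
          simp [hCmdef, Matrix.mul_diagonal, Matrix.diagonal_mul]
        simp only [h1, h2]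
        exact ((((hE j j).sqrt).inv₀ (hsqS j).ne').mul (hE j k)).mul
          (((hE k k).sqrt).inv₀ (hsqS k).ne')
      set N : ℕ → ℝ := fun n => ∑ j, ∑ k, |Cn n j k - Cm j k| with hNdef
      have hN : Tendsto N atTop (nhds 0) := by
        have : Tendsto N atTop (nhds (∑ j : Fin p, ∑ k : Fin p, (0:ℝ))) := by
          refine tendsto_finset_sum _ fun j _ => tendsto_finset_sum _ fun k _ => ?_
          have h1 : Tendsto (fun n => Cn n j k - Cm j k) atTop (nhds (Cm j k - Cm j k)) :=
            (hCE j k).sub tendsto_const_nhds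
          have h2 := h1.abs
          simpa using h2
        simpa using this
      have ht0 : Tendsto (fun n : ℕ => ε * (n:ℝ) ^ (-u)) atTop (nhds 0) := by
        have h1 : Tendsto (fun n : ℕ => ((n:ℝ)) ^ (-u)) atTop (nhds 0) :=
          (tendsto_rpow_neg_atTop hu).comp tendsto_natCast_atTop_atTop
        have := h1.const_mul ε
        simpa using this
      have hNev : ∀ᶠ n in atTop, N n < lam / 2 := hN.eventually_lt_const (half_pos hlam)
      have htev : ∀ᶠ n : ℕ in atTop, ε * (n:ℝ) ^ (-u) < lam / 2 :=
        ht0.eventually_lt_const (half_pos hlam)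
      filter_upwards [hNev, htev] with n hNn htn i
      -- d n i is a Rayleigh quotient of Cn at the i-th row of P n
      have hD : P n * Cn n * (P n)ᵀ = Matrix.diagonal (d n) := by
        simp only [hCndef]
        rw [hC n]
        rw [show P n * ((P n)ᵀ * Matrix.diagonal (d n) * P n) * (P n)ᵀ =
            (P n * (P n)ᵀ) * Matrix.diagonal (d n) * (P n * (P n)ᵀ) from by noncomm_ring]
        rw [hPPt n, one_mul, mul_one]
      have hdni : d n i = ∑ j, ∑ k, P n i j * Cn n j k * P n i k := by
        have := congrArg (fun M => M i i) hD
        simp only [Matrix.diagonal_apply_eq] at this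
        rw [← this]
        rw [Matrix.mul_apply]
        rw [Finset.sum_comm]
        refine Finset.sum_congr rfl fun k _ => ?_
        rw [Matrix.mul_apply, Finset.sum_mul]
        refine Finset.sum_congr rfl fun j _ => ?_
        rw [Matrix.transpose_apply]
      have hnorm : ∑ j, (P n i j)^2 = 1 := by
        have := congrArg (fun M => M i i) (hPPt n)
        simp only [Matrix.one_apply_eq, Matrix.mul_apply, Matrix.transpose_apply] at this
        rw [← this]
        exact Finset.sum_congr rfl fun j _ => pow_two (P n i j)
      have habs : ∀ j, |P n i j| ≤ 1 := by
        intro j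
        have h1 : (P n i j)^2 ≤ 1 := by
          rw [← hnorm]
          exact Finset.single_le_sum (fun k _ => sq_nonneg (P n i k)) (Finset.mem_univ j)
        nlinarith [abs_nonneg (P n i j), sq_abs (P n i j)]
      -- lower bound via sphere minimum
      have hmemK : (fun j => P n i j) ∈ K := by
        rw [hKdef]; exact hnorm
      have hlow : lam ≤ ∑ j, ∑ k, P n i j * Cm j k * P n i k := by
        have := hmin _ hmemK
        rw [hfdef] at this
        refine le_trans this (le_of_eq ?_)
        simp only [dotProduct, Matrix.mulVec, dotProduct]
        refine Finset.sum_congr rfl fun j _ => ?_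
        rw [Finset.mul_sum]
        refine Finset.sum_congr rfl fun k _ => ?_
        ring
      have hdiff : |∑ j, ∑ k, P n i j * (Cn n j k - Cm j k) * P n i k| ≤ N n := by
        refine le_trans (Finset.abs_sum_le_sum_abs _ _) ?_
        rw [hNdef]
        refine Finset.sum_le_sum fun j _ => ?_
        refine le_trans (Finset.abs_sum_le_sum_abs _ _) ?_
        refine Finset.sum_le_sum fun k _ => ?_
        rw [abs_mul, abs_mul]
        calc |P n i j| * |Cn n j k - Cm j k| * |P n i k|
            ≤ 1 * |Cn n j k - Cm j k| * 1 := by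
              refine mul_le_mul (mul_le_mul (habs j) le_rfl (abs_nonneg _) zero_le_one)
                (habs k) (abs_nonneg _) ?_
              positivity
          _ = |Cn n j k - Cm j k| := by ring
      have hsplit : ∑ j, ∑ k, P n i j * Cn n j k * P n i k =
          (∑ j, ∑ k, P n i j * Cm j k * P n i k) +
          (∑ j, ∑ k, P n i j * (Cn n j k - Cm j k) * P n i k) := by
        rw [← Finset.sum_add_distrib]
        refine Finset.sum_congr rfl fun j _ => ?_
        rw [← Finset.sum_add_distrib]
        refine Finset.sum_congr rfl fun k _ => ?_
        ring
      have : lam / 2 ≤ d n i := by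
        rw [hdni, hsplit]
        have h3 : -(N n) ≤ ∑ j, ∑ k, P n i j * (Cn n j k - Cm j k) * P n i k :=
          neg_le_of_abs_le hdiff
        nlinarith [hlow, h3, hNn]
      linarith [htn, this]
  -- eventual equality Splus n = Shat n
  have heq : Splus =ᶠ[atTop] Shat := by
    filter_upwards [key] with n hn
    rw [hSplus n]
    rw [show (fun i => max (d n i) (ε * (n:ℝ) ^ (-u))) = d n
      from funext fun i => max_eq_left (hn i)]
    calc (Matrix.diagonal fun i => Real.sqrt (Shat n i i)) * (P n)ᵀ *
          Matrix.diagonal (d n) * P n * (Matrix.diagonal fun i => Real.sqrt (Shat n i i))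
        = (Matrix.diagonal fun i => Real.sqrt (Shat n i i)) *
          ((P n)ᵀ * Matrix.diagonal (d n) * P n) *
          (Matrix.diagonal fun i => Real.sqrt (Shat n i i)) := by noncomm_ring
      _ = Shat n := hShat_eq n
  exact (Filter.tendsto_congr' heq).mpr hconv
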